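/- There exists an absolute constant C > 0 such that for all t ≥ 0, all nonzero integers k, l, and all ξ, η ∈ ℝ: [⟨t⟩(⟨t⟩ + |(k,ξ)|)/(|k|·⟨ξ/k⟩²·⟨t − ξ/k⟩)] · [(⟨t⟩ + |η/l|)/(⟨t⟩·⟨t − η/l⟩²)] ≤ C · ⟨η/l⟩/(⟨ξ/k⟩·⟨t − η/l⟩). -/
import Mathlib


/-- Japanese bracket `⟨a⟩ = (1 + a²)^{1/2}` of a real number. -/
noncomputable def jb (a : ℝ) : ℝ := Real.sqrt (1 + a ^ 2)

lemma one_le_jb (a : ℝ) : 1 ≤ jb a := by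
  rw [jb]
  nlinarith [Real.sq_sqrt (show (0:ℝ) ≤ 1 + a ^ 2 by positivity),
    Real.sqrt_nonneg (1 + a ^ 2), sq_nonneg a]

lemma jb_pos (a : ℝ) : 0 < jb a := lt_of_lt_of_le one_pos (one_le_jb a)

lemma abs_le_jb (a : ℝ) : |a| ≤ jb a := by
  rw [jb, ← Real.sqrt_sq_eq_abs]
  exact Real.sqrt_le_sqrt (by nlinarith)

lemma jb_tri (t u : ℝ) : jb t ≤ 2 * jb u * jb (t - u) := by
  have h2 : 2 * jb u * jb (t - u) = Real.sqrt (4 * ((1 + u ^ 2) * (1 + (t - u) ^ 2))) := by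
    rw [Real.sqrt_mul (by norm_num), Real.sqrt_mul (by positivity),
      show (4:ℝ) = 2 ^ 2 by norm_num, Real.sqrt_sq (by norm_num), jb, jb, mul_assoc]
  rw [h2, jb]
  exact Real.sqrt_le_sqrt (by nlinarith [sq_nonneg (t - 2*u), sq_nonneg (u * (t - u))])

theorem stmt3 : ∃ C : ℝ, 0 < C ∧ ∀ (t : ℝ), 0 ≤ t →
    ∀ (k l : ℤ), k ≠ 0 → l ≠ 0 → ∀ ξ η : ℝ,
    (jb t * (jb t + Real.sqrt ((k : ℝ) ^ 2 + ξ ^ 2)) /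
        (|(k : ℝ)| * (jb (ξ / (k : ℝ))) ^ 2 * jb (t - ξ / (k : ℝ)))) *
      ((jb t + |η / (l : ℝ)|) / (jb t * (jb (t - η / (l : ℝ))) ^ 2)) ≤
      C * jb (η / (l : ℝ)) / (jb (ξ / (k : ℝ)) * jb (t - η / (l : ℝ))) := by
  refine ⟨9, by norm_num, fun t ht k l hk hl ξ η => ?_⟩
  have hk0 : (k:ℝ) ≠ 0 := Int.cast_ne_zero.mpr hk
  set u := ξ / (k:ℝ) with hu
  set v := η / (l:ℝ) with hv
  set a := jb t
  set b := jb u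
  set c := jb (t - u)
  set d := jb v
  set e := jb (t - v)
  set K := |(k:ℝ)| with hK
  have hK1 : (1:ℝ) ≤ K := by
    rw [hK, ← Int.cast_abs]; exact_mod_cast Int.one_le_abs hk
  have hKpos : 0 < K := lt_of_lt_of_le one_pos hK1
  have hsq : Real.sqrt ((k:ℝ) ^ 2 + ξ ^ 2) = K * b := by
    rw [hK, ← Real.sqrt_sq_eq_abs, show b = Real.sqrt (1 + u ^ 2) from rfl,
      ← Real.sqrt_mul (sq_nonneg _)]
    congr 1
    rw [hu]
    field_simp
  have ha : 0 < a := jb_pos t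
  have hb : 0 < b := jb_pos u
  have hc : 0 < c := jb_pos (t - u)
  have hd : 0 < d := jb_pos v
  have he : 0 < e := jb_pos (t - v)
  have hc1 : 1 ≤ c := one_le_jb (t - u)
  have he1 : 1 ≤ e := one_le_jb (t - v)
  have habc : a ≤ 2 * b * c := jb_tri t u
  have hade : a ≤ 2 * d * e := jb_tri t v
  have hvd : |v| ≤ d := abs_le_jb v
  have h1 : a + K * b ≤ 3 * K * b * c := by
    nlinarith [mul_nonneg (sub_nonneg.mpr hK1) (mul_pos hb hc).le,
      mul_nonneg (mul_pos hKpos hb).le (sub_nonneg.mpr hc1)]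
  have h2 : a + |v| ≤ 3 * d * e := by
    nlinarith [mul_nonneg hd.le (sub_nonneg.mpr he1)]
  have h3 : (a + K * b) * (a + |v|) ≤ (3 * K * b * c) * (3 * d * e) :=
    mul_le_mul h1 h2 (by positivity) (by positivity)
  rw [hsq, div_mul_div_comm, div_le_div_iff₀ (by positivity) (by positivity)]
  nlinarith [mul_le_mul_of_nonneg_right h3 (show (0:ℝ) ≤ a * b * e by positivity)]
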